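/- Let c, s, τ be positive integers with 1 ≤ τ ≤ s, set d = c·s and s₁ = max(1, s−1). Let A be an n×d real matrix whose columns are indexed by pairs (l,i) ∈ {1,…,c}×{1,…,s}, with no zero rows. Let M = AᵀA, D^M its diagonal part, B^M its block-diagonal part with respect to the c blocks, and define σ = sup{xᵀMx : xᵀD^M x ≤ 1} and σ' = sup{xᵀMx : xᵀB^M x ≤ 1}. Define β* = 1 + (τ−1)(σ−1)/s₁ + (τ/s − (τ−1)/s₁)·((σ'−1)/σ')·σ. Then for every h ∈ ℝ^d, the average over all distributed samplings of (h^Ŝ)ᵀAᵀA h^Ŝ is at most (τ/s)·β*·∑_{i=1}^d (∑_{j=1}^n A_{ji}²) h_i². -/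

import Mathlib

open Finset

/-- The finite set of all distributed samplings: tuples `S = (S_1,…,S_c)` where
each `S_l` is a `τ`-element subset of the block `{1,…,s}`. -/
def samplings (c s τ : ℕ) : Finset (Fin c → Finset (Fin s)) :=
  Finset.univ.filter fun S => ∀ l, (S l).card = τ

/-- `h^Ŝ`: the vector agreeing with `h` on `Ŝ = {(l,i) : i ∈ S_l}` and `0` elsewhere. -/
def restr {c s : ℕ} (S : Fin c → Finset (Fin s)) (x : Fin c × Fin s → ℝ) :
    Fin c × Fin s → ℝ :=
  fun p => if p.2 ∈ S p.1 then x p else 0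

section AuxComb

variable {α : Type*} [DecidableEq α]

lemma card_powersetCard_filter_mem (u : Finset α) {i : α} (hi : i ∈ u) (k : ℕ)
    (p : Finset α → Prop) [DecidablePred p]
    (hp : ∀ T : Finset α, i ∉ T → (p (insert i T) ↔ p T)) :
    ((u.powersetCard (k+1)).filter fun T => i ∈ T ∧ p T).card
      = (((u.erase i).powersetCard k).filter p).card := by
  refine Finset.card_bij' (fun T _ => T.erase i) (fun T _ => insert i T) ?_ ?_ ?_ ?_
  · rintro T hT
    simp only [mem_filter, mem_powersetCard] at hT ⊢
    obtain ⟨⟨hTu, hTc⟩, hiT, hpT⟩ := hT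
    refine ⟨⟨erase_subset_erase _ hTu, by rw [card_erase_of_mem hiT, hTc]; rfl⟩, ?_⟩
    rw [← hp _ (notMem_erase _ _), insert_erase hiT]; exact hpT
  · rintro T hT
    simp only [mem_filter, mem_powersetCard] at hT ⊢
    obtain ⟨⟨hTu, hTc⟩, hpT⟩ := hT
    have hiT : i ∉ T := fun hmem => (notMem_erase i u) (hTu hmem)
    refine ⟨⟨?_, ?_⟩, mem_insert_self _ _, (hp _ hiT).2 hpT⟩
    · exact insert_subset hi (hTu.trans (erase_subset _ _))
    · rw [card_insert_of_notMem hiT, hTc]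
  · rintro T hT
    simp only [mem_filter] at hT
    exact insert_erase hT.2.1
  · rintro T hT
    simp only [mem_filter, mem_powersetCard] at hT
    exact erase_insert fun hmem => (notMem_erase i u) (hT.1.1 hmem)

variable [Fintype α]

lemma card_filter_one_mem (i : α) (k : ℕ) :
    (((univ : Finset α).powersetCard (k+1)).filter fun T => i ∈ T).card
      = (Fintype.card α - 1).choose k := by
  have h := card_powersetCard_filter_mem (univ : Finset α) (mem_univ i) k (fun _ => True)
    (fun _ _ => Iff.rfl)
  simpa [card_powersetCard, card_erase_of_mem, card_univ] using h

lemma card_filter_two_mem {i i' : α} (hne : i ≠ i') (k : ℕ) :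
    (((univ : Finset α).powersetCard (k+2)).filter fun T => i ∈ T ∧ i' ∈ T).card
      = (Fintype.card α - 2).choose k := by
  have h1 := card_powersetCard_filter_mem (univ : Finset α) (mem_univ i) (k+1)
    (fun T => i' ∈ T) (fun T _ => by simp [mem_insert, hne.symm])
  have h2 := card_powersetCard_filter_mem ((univ : Finset α).erase i)
    (mem_erase.2 ⟨hne.symm, mem_univ i'⟩) k (fun _ => True) (fun _ _ => Iff.rfl)
  simp only [and_true] at h1 h2
  rw [h1, h2]
  simp only [filter_true_of_mem (fun _ _ => trivial), card_powersetCard,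
    card_erase_of_mem (mem_erase.2 ⟨hne.symm, mem_univ i'⟩), card_erase_of_mem (mem_univ i),
    card_univ]
  congr 1

lemma card_filter_two_mem_one {i i' : α} (hne : i ≠ i') :
    (((univ : Finset α).powersetCard 1).filter fun T => i ∈ T ∧ i' ∈ T).card = 0 := by
  rw [Finset.card_eq_zero, Finset.filter_eq_empty_iff]
  rintro T hT ⟨h1, h2⟩
  rw [mem_powersetCard] at hT
  exact hne (Finset.card_le_one.1 hT.2.le _ h1 _ h2)


end AuxComb

namespace Stmt15


def C2 (s τ : ℕ) : ℕ := if τ ≤ 1 then 0 else (s-2).choose (τ-2)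
noncomputable def NR (s τ : ℕ) : ℝ := (s.choose τ : ℕ)
noncomputable def C1R (s τ : ℕ) : ℝ := ((s-1).choose (τ-1) : ℕ)
noncomputable def C2R (s τ : ℕ) : ℝ := (C2 s τ : ℕ)
noncomputable def aR (c s τ : ℕ) : ℝ := (C1R s τ - C2R s τ) * (NR s τ)^(c-1)
noncomputable def bR (c s τ : ℕ) : ℝ :=
  C2R s τ * (NR s τ)^(c-1) - (C1R s τ)^2 * (NR s τ)^(c-2)
noncomputable def cR (c s τ : ℕ) : ℝ := (C1R s τ)^2 * (NR s τ)^(c-2)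

lemma c1_id {s τ : ℕ} (hs : 0 < s) (hτ : 1 ≤ τ) :
    s * (s-1).choose (τ-1) = s.choose τ * τ := by
  have h := Nat.add_one_mul_choose_eq (s-1) (τ-1)
  have es : (s-1) + 1 = s := by omega
  have eτ : (τ-1) + 1 = τ := by omega
  rwa [es, eτ] at h

lemma c2_id {s τ : ℕ} (hs : 0 < s) (hτ : 1 ≤ τ) (hτs : τ ≤ s) :
    C2 s τ * (s * (s - 1)) = s.choose τ * (τ * (τ - 1)) := by
  rcases Nat.lt_or_ge τ 2 with h2 | h2
  · have : τ = 1 := by omega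
    subst this
    simp [C2]
  · have hs2 : 2 ≤ s := le_trans h2 hτs
    have e1 : (s - 2) + 1 = s - 1 := by omega
    have e2 : (τ - 2) + 1 = τ - 1 := by omega
    have h1 := Nat.add_one_mul_choose_eq (s-2) (τ-2)
    rw [e1, e2] at h1
    have hC2 : C2 s τ = (s-2).choose (τ-2) := by rw [C2, if_neg (by omega)]
    have h0 := c1_id hs hτ
    calc C2 s τ * (s * (s-1)) = s * ((s-1) * (s-2).choose (τ-2)) := by rw [hC2]; ring
      _ = s * ((s-1).choose (τ-1) * (τ-1)) := by rw [h1]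
      _ = (s * (s-1).choose (τ-1)) * (τ-1) := by ring
      _ = s.choose τ * (τ * (τ-1)) := by rw [h0]; ring


variable (c s τ : ℕ)

lemma samplings_eq_piFinset :
    samplings c s τ = Fintype.piFinset (fun _ : Fin c => (univ : Finset (Fin s)).powersetCard τ) := by
  ext S
  simp [samplings, Fintype.mem_piFinset, mem_powersetCard, subset_univ]

lemma sum_samplings_prod (w : Fin c → Finset (Fin s) → ℝ) :
    ∑ S ∈ samplings c s τ, ∏ l, w l (S l)
      = ∏ l, ∑ T ∈ (univ : Finset (Fin s)).powersetCard τ, w l T := by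
  rw [samplings_eq_piFinset, ← Finset.prod_univ_sum]

lemma cnt_eq (hτ : 1 ≤ τ) (p q : Fin c × Fin s) :
    ∑ S ∈ samplings c s τ,
        (if p.2 ∈ S p.1 then (1:ℝ) else 0) * (if q.2 ∈ S q.1 then 1 else 0)
      = (if p = q then aR c s τ else 0) + (if p.1 = q.1 then bR c s τ else 0) + cR c s τ := by
  have hred : ∀ (S : Fin c → Finset (Fin s)),
      (if p.2 ∈ S p.1 then (1:ℝ) else 0) * (if q.2 ∈ S q.1 then 1 else 0)
        = ∏ l, ((if p.1 = l then (if p.2 ∈ S l then (1:ℝ) else 0) else 1)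
            * (if q.1 = l then (if q.2 ∈ S l then (1:ℝ) else 0) else 1)) := by
    intro S
    rw [Finset.prod_mul_distrib, Finset.prod_ite_eq, Finset.prod_ite_eq]
    simp
  simp_rw [hred]
  rw [sum_samplings_prod c s τ (fun l T =>
    (if p.1 = l then (if p.2 ∈ T then (1:ℝ) else 0) else 1)
      * (if q.1 = l then (if q.2 ∈ T then (1:ℝ) else 0) else 1))]
  set P := (univ : Finset (Fin s)).powersetCard τ with hP
  -- the generic factor
  have hgen : ∀ l : Fin c, l ≠ p.1 → l ≠ q.1 →
      (∑ T ∈ P, ((if p.1 = l then (if p.2 ∈ T then (1:ℝ) else 0) else 1)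
        * (if q.1 = l then (if q.2 ∈ T then (1:ℝ) else 0) else 1))) = NR s τ := by
    intro l h1 h2
    rw [Finset.sum_congr rfl (fun T _ => by
      rw [if_neg (fun h => h1 h.symm), if_neg (fun h => h2 h.symm), one_mul])]
    simp [NR, hP, card_powersetCard]
  have hone : ∀ (i : Fin s), (∑ T ∈ P, (if i ∈ T then (1:ℝ) else 0)) = C1R s τ := by
    intro i
    rw [Finset.sum_boole, hP]
    have hτ' : τ = (τ - 1) + 1 := by omega
    rw [hτ']
    rw [card_filter_one_mem i (τ-1)]
    simp [C1R]
  by_cases hpq : p = q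
  · subst hpq
    rw [if_pos rfl, if_pos rfl]
    rw [← Finset.mul_prod_erase univ _ (mem_univ p.1)]
    have h1 : (∑ T ∈ P, ((if p.1 = p.1 then (if p.2 ∈ T then (1:ℝ) else 0) else 1)
        * (if p.1 = p.1 then (if p.2 ∈ T then (1:ℝ) else 0) else 1))) = C1R s τ := by
      rw [← hone p.2]
      exact Finset.sum_congr rfl fun T _ => by split_ifs <;> simp_all
    rw [h1]
    rw [Finset.prod_congr rfl (fun l hl => hgen l (mem_erase.1 hl).1 (mem_erase.1 hl).1),
      Finset.prod_const, card_erase_of_mem (mem_univ _), card_univ, Fintype.card_fin]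
    unfold aR bR cR
    ring
  · rw [if_neg hpq]
    by_cases hblk : p.1 = q.1
    · -- same block, different coordinate
      have hne2 : p.2 ≠ q.2 := fun h => hpq (Prod.ext hblk h)
      rw [if_pos hblk]
      rw [← Finset.mul_prod_erase univ _ (mem_univ p.1)]
      have h1 : (∑ T ∈ P, ((if p.1 = p.1 then (if p.2 ∈ T then (1:ℝ) else 0) else 1)
          * (if q.1 = p.1 then (if q.2 ∈ T then (1:ℝ) else 0) else 1))) = C2R s τ := by
        have : ∀ T : Finset (Fin s), (if p.2 ∈ T then (1:ℝ) else 0) * (if q.2 ∈ T then (1:ℝ) else 0)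
            = if p.2 ∈ T ∧ q.2 ∈ T then (1:ℝ) else 0 := by
          intro T; split_ifs with h1 h2 h3 h3 <;> simp_all
        rw [Finset.sum_congr rfl (fun T _ => by
          rw [if_pos rfl, if_pos hblk.symm, this T])]
        rw [Finset.sum_boole, hP]
        rcases Nat.lt_or_ge τ 2 with h2 | h2
        · have : τ = 1 := by omega
          subst this
          rw [card_filter_two_mem_one hne2]
          simp [C2R, C2]
        · have hτ' : τ = (τ - 2) + 2 := by omega
          rw [hτ', card_filter_two_mem hne2 (τ-2)]
          simp only [C2R, C2]
          rw [if_neg (by omega)]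
          simp
      rw [h1]
      rw [Finset.prod_congr rfl (fun l hl => hgen l (mem_erase.1 hl).1
          (by rw [← hblk]; exact (mem_erase.1 hl).1)),
        Finset.prod_const, card_erase_of_mem (mem_univ _), card_univ, Fintype.card_fin]
      unfold bR cR
      ring
    · -- different blocks
      rw [if_neg hblk]
      have hq1 : q.1 ∈ univ.erase p.1 := mem_erase.2 ⟨fun h => hblk h.symm, mem_univ _⟩
      rw [← Finset.mul_prod_erase univ _ (mem_univ p.1),
        ← Finset.mul_prod_erase _ _ hq1]
      have h1 : (∑ T ∈ P, ((if p.1 = p.1 then (if p.2 ∈ T then (1:ℝ) else 0) else 1)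
          * (if q.1 = p.1 then (if q.2 ∈ T then (1:ℝ) else 0) else 1))) = C1R s τ := by
        rw [Finset.sum_congr rfl (fun T _ => by
          rw [if_neg (show ¬ q.1 = p.1 from fun h => hblk h.symm), if_pos rfl, mul_one])]
        exact hone p.2
      have h2 : (∑ T ∈ P, ((if p.1 = q.1 then (if p.2 ∈ T then (1:ℝ) else 0) else 1)
          * (if q.1 = q.1 then (if q.2 ∈ T then (1:ℝ) else 0) else 1))) = C1R s τ := by
        rw [Finset.sum_congr rfl (fun T _ => by
          rw [if_neg (show ¬ p.1 = q.1 from hblk), if_pos rfl, one_mul])]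
        exact hone q.2
      rw [h1, h2]
      rw [Finset.prod_congr rfl (fun l hl => hgen l
          (mem_erase.1 (mem_of_mem_erase hl)).1 (mem_erase.1 hl).1),
        Finset.prod_const, card_erase_of_mem hq1, card_erase_of_mem (mem_univ _),
        card_univ, Fintype.card_fin]
      have : c - 1 - 1 = c - 2 := by omega
      rw [this]
      unfold cR
      ring


variable {n c s : ℕ} (A : Matrix (Fin n) (Fin c × Fin s) ℝ)

noncomputable def Df (x : Fin c × Fin s → ℝ) : ℝ := ∑ p, (∑ j, (A j p)^2) * (x p)^2
noncomputable def Mf (x : Fin c × Fin s → ℝ) : ℝ := ∑ j, (∑ p, A j p * x p)^2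
noncomputable def Bf (x : Fin c × Fin s → ℝ) : ℝ :=
  ∑ l, ∑ j, (∑ i, A j (l,i) * x (l,i))^2

lemma Bf_eq_Df_of_s_one (hs : s = 1) (x : Fin c × Fin s → ℝ) : Bf A x = Df A x := by
  subst hs
  rw [Bf, Df, Fintype.sum_prod_type]
  refine Finset.sum_congr rfl fun l _ => ?_
  simp only [Fin.sum_univ_one]
  rw [Finset.sum_mul]
  exact Finset.sum_congr rfl fun j _ => by ring

lemma Mf_eq_Bf_of_c_one (hc : c = 1) (x : Fin c × Fin s → ℝ) : Mf A x = Bf A x := by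
  subst hc
  rw [Mf, Bf, Fin.sum_univ_one]
  refine Finset.sum_congr rfl fun j _ => ?_
  congr 1
  rw [Fintype.sum_prod_type, Fin.sum_univ_one]

lemma Df_nonneg (x) : 0 ≤ Df A x :=
  Finset.sum_nonneg fun p _ => mul_nonneg (Finset.sum_nonneg fun j _ => sq_nonneg _) (sq_nonneg _)

lemma Bf_nonneg (x) : 0 ≤ Bf A x :=
  Finset.sum_nonneg fun l _ => Finset.sum_nonneg fun j _ => sq_nonneg _

lemma Mf_nonneg (x) : 0 ≤ Mf A x := Finset.sum_nonneg fun j _ => sq_nonneg _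

lemma Mf_le_mul_Df (x) : Mf A x ≤ (n * (c * s) : ℕ) * Df A x := by
  have key : ∀ j : Fin n, (∑ p, A j p * x p)^2 ≤ ((c * s : ℕ) : ℝ) * Df A x := by
    intro j
    set f : Fin c × Fin s → ℝ :=
      fun p => if (∑ j', (A j' p)^2) = 0 then 0 else A j p / Real.sqrt (∑ j', (A j' p)^2) with hf
    set g : Fin c × Fin s → ℝ := fun p => Real.sqrt (∑ j', (A j' p)^2) * x p with hg
    have hfg : ∀ p, A j p * x p = f p * g p := by
      intro p
      by_cases hD : (∑ j', (A j' p)^2) = 0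
      · have hA0 : A j p = 0 := by
          have := (Finset.sum_eq_zero_iff_of_nonneg (fun j' _ => sq_nonneg (A j' p))).1 hD j
            (mem_univ j)
          exact pow_eq_zero_iff (n := 2) (by norm_num) |>.1 this
        simp [hf, hA0, hD]
      · have hDpos : 0 < ∑ j', (A j' p)^2 :=
          lt_of_le_of_ne (Finset.sum_nonneg fun j' _ => sq_nonneg _) (Ne.symm hD)
        have hs : Real.sqrt (∑ j', (A j' p)^2) ≠ 0 := by positivity
        simp only [hf, hg, if_neg hD]
        field_simp
    have hCS := Finset.sum_mul_sq_le_sq_mul_sq univ f g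
    have hg2 : ∑ p, (g p)^2 = Df A x := by
      simp only [hg, Df, mul_pow]
      exact Finset.sum_congr rfl fun p _ => by
        rw [Real.sq_sqrt (Finset.sum_nonneg fun j' _ => sq_nonneg _)]
    have hf2 : ∑ p, (f p)^2 ≤ ((c * s : ℕ) : ℝ) := by
      have : ∀ p, (f p)^2 ≤ 1 := by
        intro p
        by_cases hD : (∑ j', (A j' p)^2) = 0
        · simp [hf, hD]
        · have hDpos : 0 < ∑ j', (A j' p)^2 :=
            lt_of_le_of_ne (Finset.sum_nonneg fun j' _ => sq_nonneg _) (Ne.symm hD)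
          simp only [hf, if_neg hD, div_pow, Real.sq_sqrt hDpos.le]
          rw [div_le_one hDpos]
          exact Finset.single_le_sum (fun j' _ => sq_nonneg (A j' p)) (mem_univ j)
      calc ∑ p, (f p)^2 ≤ ∑ p : Fin c × Fin s, (1:ℝ) := Finset.sum_le_sum fun p _ => this p
        _ = ((c * s : ℕ) : ℝ) := by simp [mul_comm]
    calc (∑ p, A j p * x p)^2 = (∑ p, f p * g p)^2 := by rw [Finset.sum_congr rfl fun p _ => hfg p]
      _ ≤ (∑ p, (f p)^2) * (∑ p, (g p)^2) := hCS
      _ ≤ ((c * s : ℕ) : ℝ) * Df A x := by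
          rw [hg2]; exact mul_le_mul_of_nonneg_right hf2 (Df_nonneg A x)
  calc Mf A x ≤ ∑ _j : Fin n, ((c * s : ℕ) : ℝ) * Df A x := Finset.sum_le_sum fun j _ => key j
    _ = (n * (c * s) : ℕ) * Df A x := by
        rw [Finset.sum_const, card_univ, Fintype.card_fin]
        push_cast
        ring

lemma Mf_le_mul_Bf (x) : Mf A x ≤ (c : ℝ) * Bf A x := by
  have key : ∀ j : Fin n, (∑ p, A j p * x p)^2 ≤ (c:ℝ) * ∑ l, (∑ i, A j (l,i) * x (l,i))^2 := by
    intro j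
    rw [Fintype.sum_prod_type]
    have hCS := Finset.sum_mul_sq_le_sq_mul_sq univ (fun _ : Fin c => (1:ℝ))
      (fun l => ∑ i, A j (l,i) * x (l,i))
    simpa [card_univ] using hCS
  calc Mf A x ≤ ∑ j, ((c:ℝ) * ∑ l, (∑ i, A j (l,i) * x (l,i))^2) :=
        Finset.sum_le_sum fun j _ => key j
    _ = (c:ℝ) * Bf A x := by rw [Bf, ← Finset.mul_sum, Finset.sum_comm]

lemma Df_div (x : Fin c × Fin s → ℝ) (t : ℝ) : Df A (fun p => x p / t) = Df A x / t^2 := by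
  simp only [Df, div_pow, Finset.sum_div]
  exact Finset.sum_congr rfl fun p _ => by ring

lemma Mf_div (x : Fin c × Fin s → ℝ) (t : ℝ) : Mf A (fun p => x p / t) = Mf A x / t^2 := by
  simp only [Mf, Finset.sum_div]
  refine Finset.sum_congr rfl fun j _ => ?_
  rw [show (∑ p, A j p * (x p / t)) = (∑ p, A j p * x p) / t by
    rw [Finset.sum_div]; exact Finset.sum_congr rfl fun p _ => by ring]
  rw [div_pow]

lemma Bf_div (x : Fin c × Fin s → ℝ) (t : ℝ) : Bf A (fun p => x p / t) = Bf A x / t^2 := by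
  simp only [Bf, Finset.sum_div]
  refine Finset.sum_congr rfl fun l _ => ?_
  refine Finset.sum_congr rfl fun j _ => ?_
  rw [show (∑ i, A j (l,i) * (x (l,i) / t)) = (∑ i, A j (l,i) * x (l,i)) / t by
    rw [Finset.sum_div]; exact Finset.sum_congr rfl fun i _ => by ring]
  rw [div_pow]

/-- the σ set -/
def set1 : Set ℝ := {y : ℝ | ∃ x : Fin c × Fin s → ℝ, Df A x ≤ 1 ∧ y = Mf A x}
/-- the σ' set -/
def set2 : Set ℝ := {y : ℝ | ∃ x : Fin c × Fin s → ℝ, Bf A x ≤ 1 ∧ y = Mf A x}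

lemma bdd1 : BddAbove (set1 A) := by
  refine ⟨((n * (c * s) : ℕ) : ℝ), ?_⟩
  rintro y ⟨x, hx, rfl⟩
  calc Mf A x ≤ (n * (c * s) : ℕ) * Df A x := Mf_le_mul_Df A x
    _ ≤ (n * (c * s) : ℕ) * 1 := by
        exact mul_le_mul_of_nonneg_left hx (by positivity)
    _ = ((n * (c * s) : ℕ) : ℝ) := mul_one _

lemma bdd2 : BddAbove (set2 A) := by
  refine ⟨(c : ℝ), ?_⟩
  rintro y ⟨x, hx, rfl⟩
  calc Mf A x ≤ (c:ℝ) * Bf A x := Mf_le_mul_Bf A x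
    _ ≤ (c:ℝ) * 1 := mul_le_mul_of_nonneg_left hx (by positivity)
    _ = (c:ℝ) := mul_one _

lemma Mf_le_sSup_set1_mul (x) : Mf A x ≤ sSup (set1 A) * Df A x := by
  rcases eq_or_lt_of_le (Df_nonneg A x) with h0 | hpos
  · -- Df A x = 0 forces Mf A x = 0
    have hz : ∀ p, (∑ j, (A j p)^2) * (x p)^2 = 0 := by
      intro p
      have := (Finset.sum_eq_zero_iff_of_nonneg
        (fun p _ => mul_nonneg (Finset.sum_nonneg fun j _ => sq_nonneg _) (sq_nonneg _))).1 h0.symm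
      exact this p (mem_univ p)
    have hMz : Mf A x = 0 := by
      rw [Mf]
      refine Finset.sum_eq_zero fun j _ => ?_
      have : ∀ p : Fin c × Fin s, A j p * x p = 0 := by
        intro p
        rcases mul_eq_zero.1 (hz p) with hD | hx2
        · have := (Finset.sum_eq_zero_iff_of_nonneg (fun j' _ => sq_nonneg (A j' p))).1 hD j
            (mem_univ j)
          rw [pow_eq_zero_iff (n := 2) (by norm_num) |>.1 this, zero_mul]
        · rw [pow_eq_zero_iff (n := 2) (by norm_num) |>.1 hx2, mul_zero]
      rw [Finset.sum_eq_zero fun p _ => this p]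
      norm_num
    rw [hMz, ← h0, mul_zero]
  · set t := Real.sqrt (Df A x) with ht
    have htpos : 0 < t := Real.sqrt_pos.2 hpos
    have ht2 : t^2 = Df A x := Real.sq_sqrt hpos.le
    have hmem : Mf A x / t^2 ∈ set1 A := by
      refine ⟨fun p => x p / t, ?_, (Mf_div A x t).symm⟩
      rw [Df_div, ht2, div_self hpos.ne']
    have hle : Mf A x / t^2 ≤ sSup (set1 A) := le_csSup (bdd1 A) hmem
    rw [div_le_iff₀ (by positivity)] at hle
    calc Mf A x ≤ sSup (set1 A) * t^2 := hle
      _ = sSup (set1 A) * Df A x := by rw [ht2]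

lemma Mf_le_sSup_set2_mul (x) : Mf A x ≤ sSup (set2 A) * Bf A x := by
  rcases eq_or_lt_of_le (Bf_nonneg A x) with h0 | hpos
  · have hz : ∀ l, ∀ j, (∑ i, A j (l,i) * x (l,i)) = 0 := by
      intro l j
      have h1 := (Finset.sum_eq_zero_iff_of_nonneg
        (fun l _ => Finset.sum_nonneg fun j _ => sq_nonneg _)).1 h0.symm l (mem_univ l)
      have h2 := (Finset.sum_eq_zero_iff_of_nonneg (fun j _ => sq_nonneg _)).1 h1 j (mem_univ j)
      exact pow_eq_zero_iff (n := 2) (by norm_num) |>.1 h2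
    have hMz : Mf A x = 0 := by
      rw [Mf]
      refine Finset.sum_eq_zero fun j _ => ?_
      rw [Fintype.sum_prod_type]
      rw [Finset.sum_eq_zero fun l _ => hz l j]
      norm_num
    rw [hMz, ← h0, mul_zero]
  · set t := Real.sqrt (Bf A x) with ht
    have htpos : 0 < t := Real.sqrt_pos.2 hpos
    have ht2 : t^2 = Bf A x := Real.sq_sqrt hpos.le
    have hmem : Mf A x / t^2 ∈ set2 A := by
      refine ⟨fun p => x p / t, ?_, (Mf_div A x t).symm⟩
      rw [Bf_div, ht2, div_self hpos.ne']
    have hle : Mf A x / t^2 ≤ sSup (set2 A) := le_csSup (bdd2 A) hmem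
    rw [div_le_iff₀ (by positivity)] at hle
    calc Mf A x ≤ sSup (set2 A) * t^2 := hle
      _ = sSup (set2 A) * Bf A x := by rw [ht2]

lemma one_mem_aux {p₀ : Fin c × Fin s} (hp₀ : (∑ j, (A j p₀)^2) ≠ 0) :
    Df A (fun p => if p = p₀ then (Real.sqrt (∑ j, (A j p₀)^2))⁻¹ else 0) = 1 ∧
    Mf A (fun p => if p = p₀ then (Real.sqrt (∑ j, (A j p₀)^2))⁻¹ else 0) = 1 ∧
    Bf A (fun p => if p = p₀ then (Real.sqrt (∑ j, (A j p₀)^2))⁻¹ else 0) = 1 := by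
  have hDpos : 0 < ∑ j, (A j p₀)^2 :=
    lt_of_le_of_ne (Finset.sum_nonneg fun j _ => sq_nonneg _) (Ne.symm hp₀)
  set t := (Real.sqrt (∑ j, (A j p₀)^2))⁻¹ with htdef
  have ht2 : t^2 = (∑ j, (A j p₀)^2)⁻¹ := by
    rw [htdef, ← Real.sqrt_inv, Real.sq_sqrt (by positivity)]
  refine ⟨?_, ?_, ?_⟩
  · rw [Df]
    rw [Finset.sum_eq_single p₀ (fun q _ hq => by simp [hq]) (fun h => absurd (mem_univ p₀) h)]
    rw [if_pos rfl, ht2, mul_inv_cancel₀ hp₀]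
  · have hin : ∀ j, (∑ p, A j p * (if p = p₀ then t else 0)) = A j p₀ * t := by
      intro j
      rw [Finset.sum_eq_single p₀ (fun q _ hq => by simp [hq]) (fun h => absurd (mem_univ p₀) h)]
      rw [if_pos rfl]
    rw [Mf, Finset.sum_congr rfl fun j _ => by rw [hin j]]
    simp only [mul_pow, ← Finset.sum_mul]
    rw [ht2, mul_inv_cancel₀ hp₀]
  · obtain ⟨l₀, i₀⟩ := p₀
    rw [Bf]
    rw [Finset.sum_eq_single l₀ ?side (fun h => absurd (mem_univ l₀) h)]
    · have hin : ∀ j, (∑ i, A j (l₀,i) * (if ((l₀,i) : Fin c × Fin s) = (l₀,i₀) then t else 0))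
          = A j (l₀,i₀) * t := by
        intro j
        rw [Finset.sum_eq_single i₀ (fun i _ hi => by simp [hi]) (fun h => absurd (mem_univ i₀) h),
          if_pos rfl]
      rw [Finset.sum_congr rfl fun j _ => by rw [hin j]]
      simp only [mul_pow, ← Finset.sum_mul]
      rw [ht2, mul_inv_cancel₀ hp₀]
    · intro l _ hl
      refine Finset.sum_eq_zero fun j _ => ?_
      rw [Finset.sum_eq_zero fun i _ => by simp [Prod.ext_iff, hl]]
      norm_num

lemma one_le_sSup_set1 {p₀ : Fin c × Fin s} (hp₀ : (∑ j, (A j p₀)^2) ≠ 0) :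
    1 ≤ sSup (set1 A) := by
  obtain ⟨hD, hM, _⟩ := one_mem_aux A hp₀
  exact le_csSup (bdd1 A) ⟨_, hD.le, hM.symm⟩

lemma one_le_sSup_set2 {p₀ : Fin c × Fin s} (hp₀ : (∑ j, (A j p₀)^2) ≠ 0) :
    1 ≤ sSup (set2 A) := by
  obtain ⟨_, hM, hB⟩ := one_mem_aux A hp₀
  exact le_csSup (bdd2 A) ⟨_, hB.le, hM.symm⟩

section Terms
variable {n c s : ℕ}

lemma term1 (F : Fin n → Fin c × Fin s → ℝ) (a : ℝ) :
    ∑ j, ∑ p, ∑ q, F j p * F j q * (if p = q then a else 0)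
      = a * ∑ j, ∑ p, (F j p)^2 := by
  rw [Finset.mul_sum]
  refine Finset.sum_congr rfl fun j _ => ?_
  rw [Finset.mul_sum]
  refine Finset.sum_congr rfl fun p _ => ?_
  rw [Finset.sum_congr rfl (fun q _ => by rw [mul_ite, mul_zero] :
    ∀ q ∈ univ, F j p * F j q * (if p = q then a else 0)
      = if p = q then F j p * F j q * a else 0)]
  rw [Finset.sum_ite_eq, if_pos (mem_univ p)]
  ring

lemma term3 (F : Fin n → Fin c × Fin s → ℝ) (e : ℝ) :
    ∑ j, ∑ p, ∑ q, F j p * F j q * e = e * ∑ j, (∑ p, F j p)^2 := by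
  rw [Finset.mul_sum]
  refine Finset.sum_congr rfl fun j _ => ?_
  rw [sq, Finset.sum_mul_sum, Finset.mul_sum]
  refine Finset.sum_congr rfl fun p _ => ?_
  rw [Finset.mul_sum]
  exact Finset.sum_congr rfl fun q _ => by ring

lemma term2 (F : Fin n → Fin c × Fin s → ℝ) (b : ℝ) :
    ∑ j, ∑ p : Fin c × Fin s, ∑ q : Fin c × Fin s, F j p * F j q * (if p.1 = q.1 then b else 0)
      = b * ∑ j, ∑ l, (∑ i, F j (l,i))^2 := by
  rw [Finset.mul_sum]
  refine Finset.sum_congr rfl fun j _ => ?_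
  rw [Fintype.sum_prod_type]
  rw [Finset.mul_sum]
  refine Finset.sum_congr rfl fun l _ => ?_
  have inner : ∀ i : Fin s,
      (∑ q : Fin c × Fin s, F j (l,i) * F j q * (if l = q.1 then b else 0))
        = ∑ i' : Fin s, F j (l,i) * F j (l,i') * b := by
    intro i
    rw [Fintype.sum_prod_type, Finset.sum_comm]
    refine Finset.sum_congr rfl fun i' _ => ?_
    rw [Finset.sum_congr rfl (fun l' _ => by rw [mul_ite, mul_zero] :
      ∀ l' ∈ univ, F j (l,i) * F j (l',i') * (if l = l' then b else 0)
        = if l = l' then F j (l,i) * F j (l',i') * b else 0)]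
    rw [Finset.sum_ite_eq, if_pos (mem_univ l)]
  rw [Finset.sum_congr rfl (fun i _ => inner i)]
  rw [sq, Finset.sum_mul_sum, Finset.mul_sum]
  refine Finset.sum_congr rfl fun i _ => ?_
  rw [Finset.mul_sum]
  exact Finset.sum_congr rfl fun i' _ => by ring

end Terms

lemma expand {n : ℕ} (c s τ : ℕ) (hτ : 1 ≤ τ) (A : Matrix (Fin n) (Fin c × Fin s) ℝ)
    (h : Fin c × Fin s → ℝ) :
    ∑ S ∈ samplings c s τ, ∑ j, (∑ p, A j p * restr S h p)^2
      = aR c s τ * Df A h + bR c s τ * Bf A h + cR c s τ * Mf A h := by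
  have step1 : ∀ S : Fin c → Finset (Fin s), ∀ j : Fin n,
      (∑ p, A j p * restr S h p)^2
        = ∑ p, ∑ q, (A j p * h p) * (A j q * h q) *
            ((if p.2 ∈ S p.1 then (1:ℝ) else 0) * (if q.2 ∈ S q.1 then 1 else 0)) := by
    intro S j
    rw [sq, Finset.sum_mul_sum]
    refine Finset.sum_congr rfl fun p _ => Finset.sum_congr rfl fun q _ => ?_
    unfold restr
    split_ifs <;> ring
  calc ∑ S ∈ samplings c s τ, ∑ j, (∑ p, A j p * restr S h p)^2
      = ∑ j, ∑ p, ∑ q, (A j p * h p) * (A j q * h q) *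
          ∑ S ∈ samplings c s τ,
            ((if p.2 ∈ S p.1 then (1:ℝ) else 0) * (if q.2 ∈ S q.1 then 1 else 0)) := by
        rw [Finset.sum_congr rfl (fun S _ => Finset.sum_congr rfl (fun j _ => step1 S j))]
        rw [Finset.sum_comm]
        refine Finset.sum_congr rfl fun j _ => ?_
        rw [Finset.sum_comm]
        refine Finset.sum_congr rfl fun p _ => ?_
        rw [Finset.sum_comm]
        refine Finset.sum_congr rfl fun q _ => ?_
        rw [Finset.mul_sum]
    _ = ∑ j, ∑ p, ∑ q, (A j p * h p) * (A j q * h q) *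
          ((if p = q then aR c s τ else 0) + (if p.1 = q.1 then bR c s τ else 0) + cR c s τ) := by
        refine Finset.sum_congr rfl fun j _ => Finset.sum_congr rfl fun p _ =>
          Finset.sum_congr rfl fun q _ => ?_
        rw [cnt_eq c s τ hτ p q]
    _ = aR c s τ * Df A h + bR c s τ * Bf A h + cR c s τ * Mf A h := by
        have split : ∀ (j : Fin n) (p q : Fin c × Fin s),
            (A j p * h p) * (A j q * h q) *
              ((if p = q then aR c s τ else 0) + (if p.1 = q.1 then bR c s τ else 0) + cR c s τ)
            = (A j p * h p) * (A j q * h q) * (if p = q then aR c s τ else 0)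
              + (A j p * h p) * (A j q * h q) * (if p.1 = q.1 then bR c s τ else 0)
              + (A j p * h p) * (A j q * h q) * cR c s τ := fun j p q => by ring
        simp_rw [split, Finset.sum_add_distrib]
        rw [term1 (fun j p => A j p * h p), term2 (fun j p => A j p * h p),
          term3 (fun j p => A j p * h p)]
        congr 1
        · congr 1
          · -- aR * ... = aR * Df
            congr 1
            rw [Finset.sum_comm, Df]
            refine Finset.sum_congr rfl fun p _ => ?_
            rw [Finset.sum_mul]
            exact Finset.sum_congr rfl fun j _ => by ring
          · congr 1
            rw [Finset.sum_comm, Bf]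


lemma Eid (c s τ : ℕ) (hc : 1 ≤ c) (hs : 1 ≤ s) (hτ : 1 ≤ τ) (hτs : τ ≤ s)
    (D B M : ℝ) (hBD : s = 1 → B = D) (hMB : c = 1 → M = B) :
    (aR c s τ * D + bR c s τ * B + cR c s τ * M) / (NR s τ)^c
      = ((τ:ℝ)/(s:ℝ)) * D
        + ((τ:ℝ)/(s:ℝ)) * (((τ:ℝ)-1)/((max 1 (s-1) : ℕ):ℝ)) * (B - D)
        + ((τ:ℝ)/(s:ℝ))^2 * (M - B) := by
  have hNpos : (0:ℝ) < NR s τ := by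
    rw [NR]; exact_mod_cast Nat.choose_pos hτs
  have hN : NR s τ ≠ 0 := hNpos.ne'
  have hsR : (0:ℝ) < (s:ℝ) := by exact_mod_cast hs
  rcases eq_or_lt_of_le hs with hs1 | hs2
  · -- s = 1, hence τ = 1, B = D
    have hs1' : s = 1 := hs1.symm
    have hτ1 : τ = 1 := by omega
    subst hs1' hτ1
    rw [hBD rfl]
    have hN1 : NR 1 1 = 1 := by norm_num [NR]
    have hC11 : C1R 1 1 = 1 := by norm_num [C1R]
    have hC21 : C2R 1 1 = 0 := by norm_num [C2R, C2]
    simp only [aR, bR, cR, hN1, hC11, hC21, one_pow]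
    norm_num
  · -- s ≥ 2
    have hs2' : 2 ≤ s := hs2
    have hmax : (max 1 (s-1) : ℕ) = s - 1 := by omega
    have hcast : ((s - 1 : ℕ) : ℝ) = (s:ℝ) - 1 := by
      push_cast [Nat.cast_sub hs]; ring
    have hs1R : (0:ℝ) < (s:ℝ) - 1 := by
      have : (2:ℝ) ≤ (s:ℝ) := by exact_mod_cast hs2'
      linarith
    have e1 : C1R s τ = NR s τ * ((τ:ℝ)/(s:ℝ)) := by
      have h := c1_id hs hτ
      have hcast1 : (s:ℝ) * C1R s τ = NR s τ * (τ:ℝ) := by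
        rw [C1R, NR]; exact_mod_cast congrArg (Nat.cast : ℕ → ℝ) h
      field_simp
      linarith [hcast1]
    have e2 : C2R s τ = NR s τ * (((τ:ℝ)/(s:ℝ)) * (((τ:ℝ)-1)/((s:ℝ)-1))) := by
      have h := c2_id hs hτ hτs
      have hτcast : ((τ - 1 : ℕ) : ℝ) = (τ:ℝ) - 1 := by
        push_cast [Nat.cast_sub hτ]; ring
      have hcast2 : C2R s τ * ((s:ℝ) * ((s:ℝ) - 1)) = NR s τ * ((τ:ℝ) * ((τ:ℝ) - 1)) := by
        rw [C2R, NR, ← hcast, ← hτcast]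
        exact_mod_cast congrArg (Nat.cast : ℕ → ℝ) h
      field_simp
      linarith [hcast2]
    rw [hmax, hcast]
    rcases eq_or_lt_of_le hc with hc1 | hc2
    · -- c = 1
      have hc1' : c = 1 := hc1.symm
      subst hc1'
      rw [hMB rfl]
      have g0 : (1:ℕ) - 1 = 0 := rfl
      simp only [aR, bR, cR, g0, pow_zero, pow_one]
      rw [e1, e2]
      field_simp
      ring
    · -- c ≥ 2
      have g1 : (NR s τ)^(c-1) = (NR s τ)^(c-2) * NR s τ := by
        rw [← pow_succ]; congr 1; omega
      have g2 : (NR s τ)^c = (NR s τ)^(c-2) * (NR s τ)^2 := by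
        rw [← pow_add]; congr 1; omega
      have hnum : aR c s τ * D + bR c s τ * B + cR c s τ * M
          = (NR s τ)^c * (((τ:ℝ)/(s:ℝ)) * D
            + ((τ:ℝ)/(s:ℝ)) * (((τ:ℝ)-1)/((s:ℝ)-1)) * (B - D)
            + ((τ:ℝ)/(s:ℝ))^2 * (M - B)) := by
        simp only [aR, bR, cR]
        rw [e1, e2, g1, g2]
        ring
      rw [hnum, mul_div_cancel_left₀ _ (pow_ne_zero c hN)]

lemma final_arith (D B M σ σ' qr al : ℝ) (hD : 0 ≤ D) (hMD : M ≤ σ * D) (hMB : M ≤ σ' * B)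
    (hσ' : 1 ≤ σ') (hσ : 0 ≤ σ) (hal0 : 0 ≤ al) (halq : al ≤ qr) :
    qr * D + qr * al * (B - D) + qr^2 * (M - B)
      ≤ qr * (1 + al * (σ - 1) + (qr - al) * ((σ' - 1)/σ') * σ) * D := by
  have hq0 : 0 ≤ qr := le_trans hal0 halq
  have hσ'0 : (0:ℝ) < σ' := lt_of_lt_of_le one_pos hσ'
  have key : D + al * (B - D) + qr * (M - B)
      ≤ (1 + al * (σ - 1) + (qr - al) * ((σ' - 1)/σ') * σ) * D := by
    have hB : M / σ' ≤ B := (div_le_iff₀ hσ'0).2 (by linarith [hMB])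
    have h1 : (al - qr) * B ≤ (al - qr) * (M / σ') :=
      mul_le_mul_of_nonpos_left hB (by linarith)
    have h2 : (al - qr) * (M/σ') + qr * M = (al + (qr - al)*((σ'-1)/σ')) * M := by
      field_simp
      ring
    have hk : 0 ≤ al + (qr - al)*((σ'-1)/σ') := by
      have hr : 0 ≤ (σ'-1)/σ' := div_nonneg (by linarith) hσ'0.le
      have := mul_nonneg (by linarith : (0:ℝ) ≤ qr - al) hr
      linarith
    have step2 : (al + (qr - al)*((σ'-1)/σ')) * M ≤ (al + (qr-al)*((σ'-1)/σ')) * (σ * D) :=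
      mul_le_mul_of_nonneg_left hMD hk
    calc D + al * (B - D) + qr * (M - B) = (1-al)*D + ((al - qr) * B + qr * M) := by ring
      _ ≤ (1-al)*D + ((al - qr) * (M/σ') + qr * M) := by linarith [h1]
      _ = (1-al)*D + (al + (qr - al)*((σ'-1)/σ')) * M := by rw [h2]
      _ ≤ (1-al)*D + (al + (qr - al)*((σ'-1)/σ')) * (σ * D) := by linarith [step2]
      _ = (1 + al * (σ - 1) + (qr - al) * ((σ' - 1)/σ') * σ) * D := by ring
  calc qr * D + qr * al * (B - D) + qr^2 * (M - B)
      = qr * (D + al * (B - D) + qr * (M - B)) := by ring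
    _ ≤ qr * ((1 + al * (σ - 1) + (qr - al) * ((σ' - 1)/σ') * σ) * D) :=
        mul_le_mul_of_nonneg_left key hq0
    _ = qr * (1 + al * (σ - 1) + (qr - al) * ((σ' - 1)/σ') * σ) * D := by ring

end Stmt15

/-- the ESO inequality underlying Lemma 3 of the paper: the
Hydra stepsizes `D²_ii = β*·∑_j A_{ji}²`.  Columns of the `n×d` matrix `A` are
indexed by `(l,i) ∈ Fin c × Fin s`, `d = c·s`, `s₁ = max(1,s−1)`, `M = AᵀA`,
`σ = sup{xᵀMx : xᵀD^M x ≤ 1}`, `σ' = sup{xᵀMx : xᵀB^M x ≤ 1}` and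
`β* = 1 + (τ−1)(σ−1)/s₁ + (τ/s − (τ−1)/s₁)·((σ'−1)/σ')·σ`.  For every `h`, the
average over all distributed samplings of `(h^Ŝ)ᵀAᵀA h^Ŝ` is at most
`(τ/s)·β*·∑_i (∑_j A_{ji}²) h_i²`. -/
theorem stmt_15 (c s τ : ℕ) (hc : 0 < c) (hs : 0 < s) (hτ : 1 ≤ τ) (hτs : τ ≤ s)
    (n : ℕ) (A : Matrix (Fin n) (Fin c × Fin s) ℝ)
    (hrows : ∀ j : Fin n, ∃ p : Fin c × Fin s, A j p ≠ 0)
    (σ σ' : ℝ)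
    (hσ : σ = sSup {y : ℝ | ∃ x : Fin c × Fin s → ℝ,
      (∑ p : Fin c × Fin s, (∑ j : Fin n, (A j p) ^ 2) * (x p) ^ 2) ≤ 1 ∧
      y = ∑ j : Fin n, (∑ p : Fin c × Fin s, A j p * x p) ^ 2})
    (hσ' : σ' = sSup {y : ℝ | ∃ x : Fin c × Fin s → ℝ,
      (∑ l : Fin c, ∑ j : Fin n, (∑ i : Fin s, A j (l, i) * x (l, i)) ^ 2) ≤ 1 ∧
      y = ∑ j : Fin n, (∑ p : Fin c × Fin s, A j p * x p) ^ 2})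
    (h : Fin c × Fin s → ℝ) :
    (∑ S ∈ samplings c s τ,
        ∑ j : Fin n, (∑ p : Fin c × Fin s, A j p * restr S h p) ^ 2) /
        ((s.choose τ : ℝ) ^ c) ≤
      ((τ : ℝ) / (s : ℝ)) *
        (1 + ((τ : ℝ) - 1) * (σ - 1) / ((max 1 (s - 1) : ℕ) : ℝ)
          + ((τ : ℝ) / (s : ℝ) - ((τ : ℝ) - 1) / ((max 1 (s - 1) : ℕ) : ℝ)) *
              ((σ' - 1) / σ') * σ) *
        ∑ p : Fin c × Fin s, (∑ j : Fin n, (A j p) ^ 2) * (h p) ^ 2 := by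
  rcases Nat.eq_zero_or_pos n with hn | hn
  · subst hn
    simp
  · obtain ⟨p₀, hA0⟩ := hrows ⟨0, hn⟩
    have hp₀ : (∑ j, (A j p₀)^2) ≠ 0 := by
      have h1 : (0:ℝ) < (A ⟨0,hn⟩ p₀)^2 := by positivity
      have h2 : (A ⟨0,hn⟩ p₀)^2 ≤ ∑ j, (A j p₀)^2 :=
        Finset.single_le_sum (f := fun j => (A j p₀)^2) (fun j _ => sq_nonneg _) (mem_univ _)
      exact (lt_of_lt_of_le h1 h2).ne'
    have hset1 : {y : ℝ | ∃ x : Fin c × Fin s → ℝ,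
        (∑ p : Fin c × Fin s, (∑ j : Fin n, (A j p) ^ 2) * (x p) ^ 2) ≤ 1 ∧
        y = ∑ j : Fin n, (∑ p : Fin c × Fin s, A j p * x p) ^ 2} = Stmt15.set1 A := rfl
    have hset2 : {y : ℝ | ∃ x : Fin c × Fin s → ℝ,
        (∑ l : Fin c, ∑ j : Fin n, (∑ i : Fin s, A j (l, i) * x (l, i)) ^ 2) ≤ 1 ∧
        y = ∑ j : Fin n, (∑ p : Fin c × Fin s, A j p * x p) ^ 2} = Stmt15.set2 A := rfl
    rw [hset1] at hσ
    rw [hset2] at hσ'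
    have hσ1 : 1 ≤ σ := by rw [hσ]; exact Stmt15.one_le_sSup_set1 A hp₀
    have hσ'1 : 1 ≤ σ' := by rw [hσ']; exact Stmt15.one_le_sSup_set2 A hp₀
    have hMD : Stmt15.Mf A h ≤ σ * Stmt15.Df A h := by
      rw [hσ]; exact Stmt15.Mf_le_sSup_set1_mul A h
    have hMB : Stmt15.Mf A h ≤ σ' * Stmt15.Bf A h := by
      rw [hσ']; exact Stmt15.Mf_le_sSup_set2_mul A h
    rw [Stmt15.expand c s τ hτ A h]
    have hD : (∑ p : Fin c × Fin s, (∑ j : Fin n, (A j p)^2) * (h p)^2) = Stmt15.Df A h := rfl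
    rw [hD]
    have hNR : ((s.choose τ : ℕ) : ℝ) = Stmt15.NR s τ := rfl
    rw [hNR]
    rw [Stmt15.Eid c s τ hc hs hτ hτs _ _ _
      (fun h1 => Stmt15.Bf_eq_Df_of_s_one A h1 h)
      (fun h1 => Stmt15.Mf_eq_Bf_of_c_one A h1 h)]
    set s1R : ℝ := ((max 1 (s-1) : ℕ) : ℝ) with hs1Rdef
    have hs1Rpos : (0:ℝ) < s1R := by
      rw [hs1Rdef]
      exact_mod_cast Nat.lt_of_lt_of_le zero_lt_one (le_max_left _ _)
    have hτR : (1:ℝ) ≤ (τ:ℝ) := by exact_mod_cast hτ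
    have hτsR : (τ:ℝ) ≤ (s:ℝ) := by exact_mod_cast hτs
    have hsRpos : (0:ℝ) < (s:ℝ) := by exact_mod_cast hs
    have hal0 : 0 ≤ ((τ:ℝ)-1)/s1R := div_nonneg (by linarith) hs1Rpos.le
    have hs1R_ge : (s:ℝ) - 1 ≤ s1R := by
      rw [hs1Rdef]
      have h1 : s - 1 ≤ max 1 (s-1) := le_max_right _ _
      have h2 : ((s-1:ℕ):ℝ) = (s:ℝ) - 1 := by push_cast [Nat.cast_sub hs]; ring
      calc (s:ℝ) - 1 = ((s-1:ℕ):ℝ) := h2.symm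
        _ ≤ _ := by exact_mod_cast h1
    have halq : ((τ:ℝ)-1)/s1R ≤ (τ:ℝ)/(s:ℝ) := by
      rw [div_le_div_iff₀ hs1Rpos hsRpos]
      have hm : (τ:ℝ)*((s:ℝ)-1) ≤ (τ:ℝ)*s1R := mul_le_mul_of_nonneg_left hs1R_ge (by linarith)
      linarith [hm]
    have harith := Stmt15.final_arith (Stmt15.Df A h) (Stmt15.Bf A h) (Stmt15.Mf A h) σ σ'
      ((τ:ℝ)/(s:ℝ)) (((τ:ℝ)-1)/s1R) (Stmt15.Df_nonneg A h) hMD hMB hσ'1 (by linarith) hal0 halq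
    calc (τ:ℝ)/(s:ℝ) * Stmt15.Df A h
          + (τ:ℝ)/(s:ℝ) * (((τ:ℝ)-1)/s1R) * (Stmt15.Bf A h - Stmt15.Df A h)
          + ((τ:ℝ)/(s:ℝ))^2 * (Stmt15.Mf A h - Stmt15.Bf A h)
        ≤ ((τ:ℝ)/(s:ℝ)) * (1 + (((τ:ℝ)-1)/s1R) * (σ - 1)
            + ((τ:ℝ)/(s:ℝ) - ((τ:ℝ)-1)/s1R) * ((σ' - 1)/σ') * σ) * Stmt15.Df A h := harith
      _ = ((τ:ℝ)/(s:ℝ)) * (1 + ((τ:ℝ)-1) * (σ - 1) / s1R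
            + ((τ:ℝ)/(s:ℝ) - ((τ:ℝ)-1)/s1R) * ((σ' - 1)/σ') * σ) * Stmt15.Df A h := by
          ring
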